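/- In the auxiliary greedy algorithm for local experts, no iteration decreases the quantity R(P) + (1/3)·Σ_{t∈M} φ(A_t ∩ I'). Consequently, the output partition P_A satisfies R(P_A) ≥ (1/3)·Σ_{t∈M} φ(A_t). -/

import Mathlib

open Finset

/-- The second-highest value of `f` over a finite type (0 if fewer than two indices),
computed as the maximum over pairs of distinct indices of the minimum of the two values. -/
noncomputable def secondMax {B : Type*} [Fintype B] [DecidableEq B] (f : B → ℝ) : ℝ :=
  ((Finset.univ ×ˢ Finset.univ).filter (fun p : B × B => p.1 ≠ p.2)).fold max 0
    (fun p => min (f p.1) (f p.2))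

/-- The contribution `μ(S)·v(S)` of a part `S`: the second-highest, over bidders `i`,
of `Σ_{j∈S} μ j · vals i j`. -/
noncomputable def partVal {I B : Type*} [Fintype B] [DecidableEq B]
    (μ : I → ℝ) (vals : B → I → ℝ) (S : Finset I) : ℝ :=
  secondMax (fun i => ∑ j ∈ S, μ j * vals i j)

/-- The revenue of a collection of parts. -/
noncomputable def revenue {I B : Type*} [Fintype B] [DecidableEq B]
    (μ : I → ℝ) (vals : B → I → ℝ) (P : Finset (Finset I)) : ℝ :=
  ∑ S ∈ P, partVal μ vals S

/-- `P` is a partition of the whole item set. -/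
def IsPartition {I : Type*} (P : Finset (Finset I)) : Prop :=
  (∀ j : I, ∃ S ∈ P, j ∈ S) ∧
  (∀ S ∈ P, ∀ T ∈ P, S ≠ T → Disjoint S T) ∧
  (∅ : Finset I) ∉ P

/-- `h_j = μ(j)` times the highest value of item `j` among bidders. -/
noncomputable def hval {I B : Type*} [Fintype B] (μ : I → ℝ) (vals : B → I → ℝ)
    (j : I) : ℝ :=
  Finset.univ.fold max 0 (fun i : B => μ j * vals i j)

/-- `φ(S)`: with `owner j` the bidder valuing `j` most, the sum of all but the largest
of the per-bidder totals `Σ_{j ∈ H_i ∩ S} h_j`, i.e. the sum of the `|B|-1` smallest. -/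
noncomputable def phi {I B : Type*} [Fintype B] [DecidableEq I] [DecidableEq B]
    (μ : I → ℝ) (vals : B → I → ℝ) (owner : I → B) (S : Finset I) : ℝ :=
  (∑ j ∈ S, hval μ vals j) -
    Finset.univ.fold max 0 (fun i : B => ∑ j ∈ S.filter (fun j => owner j = i), hval μ vals j)

/-- `Sj` is a cover of `j`: for some mediator `t` with `j ∈ I_t` and some bidder
`i' ≠ owner j`, `Sj ⊆ I_t ∩ H_{i'}`. -/
def IsCover {I B M : Type*} (Iset : M → Finset I) (owner : I → B)
    (j : I) (Sj : Finset I) : Prop :=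
  ∃ (t : M) (i' : B), j ∈ Iset t ∧ i' ≠ owner j ∧
    ∀ x ∈ Sj, x ∈ Iset t ∧ owner x = i'

section AuxDefs

variable {I B M : Type*} [Fintype I] [DecidableEq I] [Fintype B] [DecidableEq B] [Fintype M]

set_option linter.unusedSectionVars false

/-- auxiliary: per-bidder owned total. -/
noncomputable def gfun (μ : I → ℝ) (vals : B → I → ℝ) (owner : I → B)
    (S : Finset I) (i : B) : ℝ :=
  ∑ j ∈ S.filter (fun j => owner j = i), hval μ vals j

/-- auxiliary: max per-bidder owned total. -/
noncomputable def mxf (μ : I → ℝ) (vals : B → I → ℝ) (owner : I → B)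
    (S : Finset I) : ℝ :=
  Finset.univ.fold max 0 (gfun μ vals owner S)

variable {μ : I → ℝ} {vals : B → I → ℝ} {owner : I → B}

lemma phi_eq (S : Finset I) :
    phi μ vals owner S = (∑ j ∈ S, hval μ vals j) - mxf μ vals owner S := rfl

lemma hval_nonneg (j : I) : 0 ≤ hval μ vals j := by
  unfold hval; exact (Finset.le_fold_max _).mpr (Or.inl le_rfl)

lemma sum_hval_nonneg (S : Finset I) : 0 ≤ ∑ j ∈ S, hval μ vals j :=
  Finset.sum_nonneg fun j _ => hval_nonneg j

lemma hval_eq_owner (hμ : ∀ j, 0 ≤ μ j) (hv : ∀ i j, 0 ≤ vals i j)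
    (howner : ∀ (i : B) (j : I), vals i j ≤ vals (owner j) j)
    (x : I) : hval μ vals x = μ x * vals (owner x) x := by
  unfold hval
  apply le_antisymm
  · exact (Finset.fold_max_le _).mpr ⟨mul_nonneg (hμ x) (hv _ x),
      fun i _ => mul_le_mul_of_nonneg_left (howner i x) (hμ x)⟩
  · exact (Finset.le_fold_max _).mpr (Or.inr ⟨owner x, Finset.mem_univ _, le_rfl⟩)

lemma gfun_nonneg (S : Finset I) (i : B) : 0 ≤ gfun μ vals owner S i :=
  Finset.sum_nonneg fun j _ => hval_nonneg j

lemma gfun_le_mxf (S : Finset I) (i : B) : gfun μ vals owner S i ≤ mxf μ vals owner S := by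
  unfold mxf; exact (Finset.le_fold_max _).mpr (Or.inr ⟨i, Finset.mem_univ _, le_rfl⟩)

lemma mxf_nonneg (S : Finset I) : 0 ≤ mxf μ vals owner S := by
  unfold mxf; exact (Finset.le_fold_max _).mpr (Or.inl le_rfl)

lemma gfun_mono {S S' : Finset I} (h : S ⊆ S') (i : B) :
    gfun μ vals owner S i ≤ gfun μ vals owner S' i :=
  Finset.sum_le_sum_of_subset_of_nonneg (Finset.filter_subset_filter _ h)
    (fun j _ _ => hval_nonneg j)

lemma mxf_mono {S S' : Finset I} (h : S ⊆ S') :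
    mxf μ vals owner S ≤ mxf μ vals owner S' := by
  unfold mxf
  exact (Finset.fold_max_le _).mpr ⟨mxf_nonneg S', fun i _ => (gfun_mono h i).trans (gfun_le_mxf S' i)⟩

lemma phi_empty : phi μ vals owner (∅ : Finset I) = 0 := by
  have h1 : mxf μ vals owner (∅ : Finset I) = 0 := by
    refine le_antisymm ?_ (mxf_nonneg _)
    unfold mxf
    exact (Finset.fold_max_le _).mpr ⟨le_rfl, fun i _ => by simp [gfun]⟩
  rw [phi_eq, h1]; simp

/-- removing a set of items decreases φ by at most the sum of their h-values -/
lemma phi_sdiff_le (S T : Finset I) :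
    phi μ vals owner S - phi μ vals owner (S \ T) ≤ ∑ x ∈ S ∩ T, hval μ vals x := by
  have hsum := Finset.sum_sdiff (f := hval μ vals) (sdiff_subset : S \ T ⊆ S)
  rw [Finset.sdiff_sdiff_self_left] at hsum
  have hmx : mxf μ vals owner (S \ T) ≤ mxf μ vals owner S := mxf_mono sdiff_subset
  rw [phi_eq, phi_eq]
  linarith

/-- refined bound: removing `j` decreases φ by at most `C` whenever every bidder other
than `owner j` owns at most `C` worth of items in `S`. -/
lemma phi_erase_le {S : Finset I} {j : I} (hj : j ∈ S) {C : ℝ} (hC0 : 0 ≤ C)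
    (hC : ∀ i, i ≠ owner j → gfun μ vals owner S i ≤ C) :
    phi μ vals owner S - phi μ vals owner (S.erase j) ≤ C := by
  have hjm : hval μ vals j ≤ gfun μ vals owner S (owner j) :=
    Finset.single_le_sum (fun x _ => hval_nonneg x) (Finset.mem_filter.mpr ⟨hj, rfl⟩)
  have hmxj : hval μ vals j ≤ mxf μ vals owner S := hjm.trans (gfun_le_mxf S _)
  have hsum : (∑ x ∈ S.erase j, hval μ vals x) + hval μ vals j = ∑ x ∈ S, hval μ vals x :=
    Finset.sum_erase_add S _ hj
  have hub : ∀ i : B, gfun μ vals owner (S.erase j) i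
      ≤ mxf μ vals owner S - hval μ vals j + C := by
    intro i
    by_cases hi : i = owner j
    · subst hi
      have hjf : j ∈ S.filter (fun x => owner x = owner j) := Finset.mem_filter.mpr ⟨hj, rfl⟩
      have heq : gfun μ vals owner (S.erase j) (owner j)
          = gfun μ vals owner S (owner j) - hval μ vals j := by
        unfold gfun
        rw [Finset.filter_erase, Finset.sum_erase_eq_sub hjf]
      rw [heq]
      have h2 := gfun_le_mxf (μ := μ) (vals := vals) (owner := owner) S (owner j)
      linarith
    · have hnm : j ∉ S.filter (fun x => owner x = i) := by
        intro hmem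
        exact hi ((Finset.mem_filter.mp hmem).2).symm
      have heq : gfun μ vals owner (S.erase j) i = gfun μ vals owner S i := by
        unfold gfun
        rw [Finset.filter_erase, Finset.erase_eq_of_notMem hnm]
      rw [heq]
      have h2 := hC i hi
      linarith
  have hmx' : mxf μ vals owner (S.erase j) ≤ mxf μ vals owner S - hval μ vals j + C := by
    show Finset.univ.fold max 0 (gfun μ vals owner (S.erase j)) ≤ _
    exact (Finset.fold_max_le _).mpr ⟨by linarith, fun i _ => hub i⟩
  rw [phi_eq, phi_eq]
  linarith

lemma secondMax_nonneg (f : B → ℝ) : 0 ≤ secondMax f := by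
  unfold secondMax; exact (Finset.le_fold_max _).mpr (Or.inl le_rfl)

lemma partVal_nonneg (S : Finset I) : 0 ≤ partVal μ vals S := secondMax_nonneg _

lemma min_le_secondMax (f : B → ℝ) {i1 i2 : B} (h : i1 ≠ i2) :
    min (f i1) (f i2) ≤ secondMax f := by
  unfold secondMax
  exact (Finset.le_fold_max _).mpr (Or.inr ⟨(i1, i2), by simp [h], le_rfl⟩)

lemma partVal_ge (hμ : ∀ j, 0 ≤ μ j) (hv : ∀ i j, 0 ≤ vals i j)
    (howner : ∀ (i : B) (j : I), vals i j ≤ vals (owner j) j)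
    {j : I} {Sj : Finset I} {i' : B} (hi' : i' ≠ owner j)
    (hSo : ∀ x ∈ Sj, owner x = i') (hjS : j ∉ Sj) :
    min (hval μ vals j) (∑ x ∈ Sj, hval μ vals x) ≤ partVal μ vals (insert j Sj) := by
  have hterm : ∀ (i : B) (x : I), 0 ≤ μ x * vals i x := fun i x => mul_nonneg (hμ x) (hv i x)
  have h1 : hval μ vals j ≤ ∑ x ∈ insert j Sj, μ x * vals (owner j) x := by
    rw [hval_eq_owner hμ hv howner]
    exact Finset.single_le_sum (fun x _ => hterm (owner j) x) (Finset.mem_insert_self j Sj)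
  have h2 : (∑ x ∈ Sj, hval μ vals x) ≤ ∑ x ∈ insert j Sj, μ x * vals i' x := by
    rw [Finset.sum_insert hjS]
    have heq : (∑ x ∈ Sj, hval μ vals x) = ∑ x ∈ Sj, μ x * vals i' x :=
      Finset.sum_congr rfl fun x hx => by
        rw [hval_eq_owner hμ hv howner, hSo x hx]
    rw [heq]
    have := hterm i' j
    linarith
  calc min (hval μ vals j) (∑ x ∈ Sj, hval μ vals x)
      ≤ min (∑ x ∈ insert j Sj, μ x * vals (owner j) x)
          (∑ x ∈ insert j Sj, μ x * vals i' x) := le_min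
            ((min_le_left _ _).trans h1) ((min_le_right _ _).trans h2)
    _ ≤ partVal μ vals (insert j Sj) := min_le_secondMax (fun i => ∑ x ∈ insert j Sj, μ x * vals i x) (Ne.symm hi')

lemma sum_disjoint_le {T : Finset I} {u : M → Finset I} (hu : ∀ t, u t ⊆ T)
    (hd : ∀ t t', t ≠ t' → Disjoint (u t) (u t')) :
    ∑ t : M, ∑ x ∈ u t, hval μ vals x ≤ ∑ x ∈ T, hval μ vals x := by
  rw [← Finset.sum_biUnion (fun a _ b _ hab => hd a b hab)]
  exact Finset.sum_le_sum_of_subset_of_nonneg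
    (Finset.biUnion_subset.mpr fun t _ => hu t) (fun x _ _ => hval_nonneg x)

end AuxDefs

section Main

variable {I B M : Type*} [Fintype I] [DecidableEq I] [Fintype B] [DecidableEq B] [Fintype M]
variable {μ : I → ℝ} {vals : B → I → ℝ} {Iset : M → Finset I} {owner : I → B} {A : M → Finset I}

set_option linter.unusedSectionVars false

lemma stepA (hμ : ∀ j, 0 ≤ μ j) (hv : ∀ i j, 0 ≤ vals i j)
    (howner : ∀ (i : B) (j : I), vals i j ≤ vals (owner j) j)
    (hA : ∀ t, A t ⊆ Iset t)
    (hAdisj : ∀ t t', t ≠ t' → Disjoint (A t) (A t'))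
    (I' : Finset I) (j : I) (Sj : Finset I)
    (hjI : j ∈ I') (hmax : ∀ j' ∈ I', hval μ vals j' ≤ hval μ vals j)
    (hSj : Sj ⊆ I'.erase j) (hcov : IsCover Iset owner j Sj)
    (hcase : (hval μ vals j ≤ ∑ x ∈ Sj, hval μ vals x ∧
          ∑ x ∈ Sj, hval μ vals x ≤ 2 * hval μ vals j) ∨
        ((∑ x ∈ Sj, hval μ vals x) < hval μ vals j ∧
          ∀ S' ⊆ I'.erase j, IsCover Iset owner j S' →
            ∑ x ∈ S', hval μ vals x ≤ ∑ x ∈ Sj, hval μ vals x)) :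
    (1 / 3 : ℝ) * ∑ t : M, phi μ vals owner (A t ∩ I') ≤
        partVal μ vals (insert j Sj) +
          (1 / 3 : ℝ) * ∑ t : M, phi μ vals owner (A t ∩ (I' \ insert j Sj)) := by
  classical
  set T := insert j Sj with hT
  have hjSj : j ∉ Sj := fun h => (Finset.mem_erase.mp (hSj h)).1 rfl
  obtain ⟨t₀, i', hjt₀, hi', hcovmem⟩ := hcov
  have hpv : min (hval μ vals j) (∑ x ∈ Sj, hval μ vals x) ≤ partVal μ vals T :=
    partVal_ge hμ hv howner hi' (fun x hx => (hcovmem x hx).2) hjSj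
  have hdisjAI : ∀ (W : Finset I) (t t' : M), t ≠ t' →
      Disjoint ((A t ∩ I') ∩ W) ((A t' ∩ I') ∩ W) := fun W t t' htt =>
    (hAdisj t t' htt).mono (Finset.inter_subset_left.trans Finset.inter_subset_left)
      (Finset.inter_subset_left.trans Finset.inter_subset_left)
  have key : ∑ t : M, (phi μ vals owner (A t ∩ I') - phi μ vals owner ((A t ∩ I') \ T))
      ≤ 3 * partVal μ vals T := by
    rcases hcase with ⟨h1, h2⟩ | ⟨h1, hmaxcov⟩
    · -- case 1
      have hsum := Finset.sum_le_sum (fun t (_ : t ∈ Finset.univ) =>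
        phi_sdiff_le (μ := μ) (vals := vals) (owner := owner) (A t ∩ I') T)
      have hs : ∑ t : M, ∑ x ∈ (A t ∩ I') ∩ T, hval μ vals x ≤ ∑ x ∈ T, hval μ vals x :=
        sum_disjoint_le (fun t => Finset.inter_subset_right) (hdisjAI T)
      have hTsum : ∑ x ∈ T, hval μ vals x = hval μ vals j + ∑ x ∈ Sj, hval μ vals x :=
        Finset.sum_insert hjSj
      have hminle : hval μ vals j ≤ partVal μ vals T := by
        rw [min_eq_left h1] at hpv; exact hpv
      calc ∑ t : M, (phi μ vals owner (A t ∩ I') - phi μ vals owner ((A t ∩ I') \ T))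
          ≤ ∑ t : M, ∑ x ∈ (A t ∩ I') ∩ T, hval μ vals x := hsum
        _ ≤ ∑ x ∈ T, hval μ vals x := hs
        _ ≤ 3 * partVal μ vals T := by rw [hTsum]; linarith
    · -- case 2
      set C := ∑ x ∈ Sj, hval μ vals x with hCdef
      have hC0 : 0 ≤ C := sum_hval_nonneg Sj
      have hb : ∀ t : M, phi μ vals owner (A t ∩ I') - phi μ vals owner ((A t ∩ I') \ T)
          ≤ (if j ∈ A t then C else 0) + ∑ x ∈ (A t ∩ I') ∩ Sj, hval μ vals x := by
        intro t
        by_cases hjt : j ∈ A t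
        · rw [if_pos hjt]
          set S := A t ∩ I' with hSdef
          have hjS : j ∈ S := Finset.mem_inter.mpr ⟨hjt, hjI⟩
          have hstep1 : phi μ vals owner S - phi μ vals owner (S.erase j) ≤ C := by
            apply phi_erase_le hjS hC0
            intro i hi
            have hcover : IsCover Iset owner j (S.filter (fun x => owner x = i)) := by
              refine ⟨t, i, hA t hjt, hi, fun x hx => ?_⟩
              have hx' := Finset.mem_filter.mp hx
              exact ⟨hA t (Finset.mem_inter.mp hx'.1).1, hx'.2⟩
            have hsub : S.filter (fun x => owner x = i) ⊆ I'.erase j := by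
              intro x hx
              have hx' := Finset.mem_filter.mp hx
              refine Finset.mem_erase.mpr ⟨fun hxj => ?_, (Finset.mem_inter.mp hx'.1).2⟩
              exact hi ((hxj ▸ hx'.2)).symm
            exact hmaxcov _ hsub hcover
          have hstep2 : phi μ vals owner (S.erase j) - phi μ vals owner ((S.erase j) \ Sj)
              ≤ ∑ x ∈ (S.erase j) ∩ Sj, hval μ vals x := phi_sdiff_le _ _
          have heq1 : (S.erase j) \ Sj = S \ T := by
            ext x
            simp only [Finset.mem_sdiff, Finset.mem_erase, hT, Finset.mem_insert]
            tauto
          have hle2 : ∑ x ∈ (S.erase j) ∩ Sj, hval μ vals x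
              ≤ ∑ x ∈ S ∩ Sj, hval μ vals x :=
            Finset.sum_le_sum_of_subset_of_nonneg
              (Finset.inter_subset_inter (Finset.erase_subset _ _) Finset.Subset.rfl)
              (fun x _ _ => hval_nonneg x)
          rw [heq1] at hstep2
          linarith
        · rw [if_neg hjt, zero_add]
          have hjS : j ∉ A t ∩ I' := fun h => hjt (Finset.mem_inter.mp h).1
          have heq : (A t ∩ I') ∩ T = (A t ∩ I') ∩ Sj := by
            ext x
            simp only [Finset.mem_inter, hT, Finset.mem_insert]
            constructor
            · rintro ⟨hx, (rfl | hxs)⟩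
              · exact absurd (Finset.mem_inter.mpr hx) hjS
              · exact ⟨hx, hxs⟩
            · rintro ⟨hx, hxs⟩
              exact ⟨hx, Or.inr hxs⟩
          calc phi μ vals owner (A t ∩ I') - phi μ vals owner ((A t ∩ I') \ T)
              ≤ ∑ x ∈ (A t ∩ I') ∩ T, hval μ vals x := phi_sdiff_le _ _
            _ = ∑ x ∈ (A t ∩ I') ∩ Sj, hval μ vals x := by rw [heq]
      have hsum := Finset.sum_le_sum (fun t (_ : t ∈ Finset.univ) => hb t)
      rw [Finset.sum_add_distrib] at hsum
      have hite : ∑ t : M, (if j ∈ A t then C else 0) ≤ C := by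
        rw [← Finset.sum_filter]
        have hcard : (Finset.univ.filter (fun t : M => j ∈ A t)).card ≤ 1 := by
          refine Finset.card_le_one.mpr (fun a ha b hb => ?_)
          by_contra hne
          exact (Finset.disjoint_left.mp (hAdisj a b hne)
            (Finset.mem_filter.mp ha).2) (Finset.mem_filter.mp hb).2
        rw [Finset.sum_const, nsmul_eq_mul]
        calc ((Finset.univ.filter (fun t : M => j ∈ A t)).card : ℝ) * C
            ≤ 1 * C := by
              apply mul_le_mul_of_nonneg_right _ hC0
              exact_mod_cast hcard
          _ = C := one_mul C
      have hs2 : ∑ t : M, ∑ x ∈ (A t ∩ I') ∩ Sj, hval μ vals x ≤ C :=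
        sum_disjoint_le (fun t => Finset.inter_subset_right) (hdisjAI Sj)
      have hminle : C ≤ partVal μ vals T := by
        rw [min_eq_right h1.le] at hpv; exact hpv
      linarith
  have hsplit : ∑ t : M, (phi μ vals owner (A t ∩ I') - phi μ vals owner ((A t ∩ I') \ T))
      = (∑ t : M, phi μ vals owner (A t ∩ I'))
        - ∑ t : M, phi μ vals owner ((A t ∩ I') \ T) := Finset.sum_sub_distrib _ _
  have hcongr : ∑ t : M, phi μ vals owner (A t ∩ (I' \ T))
      = ∑ t : M, phi μ vals owner ((A t ∩ I') \ T) :=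
    Finset.sum_congr rfl (fun t _ => by
      congr 1
      ext x
      simp only [Finset.mem_inter, Finset.mem_sdiff]
      tauto)
  rw [hcongr]
  linarith

end Main

section PartB

variable {I B M : Type*} [Fintype I] [DecidableEq I] [Fintype B] [DecidableEq B] [Fintype M]
variable {μ : I → ℝ} {vals : B → I → ℝ} {Iset : M → Finset I} {owner : I → B} {A : M → Finset I}

set_option linter.unusedSectionVars false

lemma cover_subset {j : I} {S S' : Finset I} (hc : IsCover Iset owner j S) (hsub : S' ⊆ S) :
    IsCover Iset owner j S' := by
  obtain ⟨t, i', h1, h2, h3⟩ := hc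
  exact ⟨t, i', h1, h2, fun x hx => h3 x (hsub hx)⟩

lemma greedy_partition (hμ : ∀ j, 0 ≤ μ j) (hv : ∀ i j, 0 ≤ vals i j)
    (howner : ∀ (i : B) (j : I), vals i j ≤ vals (owner j) j)
    (hA : ∀ t, A t ⊆ Iset t)
    (hAdisj : ∀ t t', t ≠ t' → Disjoint (A t) (A t')) :
    ∀ (n : ℕ) (I' : Finset I), I'.card ≤ n → I' ⊆ Finset.univ.sup Iset →
    ∃ P : Finset (Finset I),
      (∀ S ∈ P, S.Nonempty ∧ ∃ t : M, S ⊆ Iset t) ∧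
      (∀ S ∈ P, ∀ S' ∈ P, S ≠ S' → Disjoint S S') ∧
      P.biUnion id = I' ∧
      (1 / 3 : ℝ) * ∑ t : M, phi μ vals owner (A t ∩ I') ≤ revenue μ vals P := by
  classical
  intro n
  induction n with
  | zero =>
    intro I' hcard _
    have hemp : I' = ∅ := Finset.card_eq_zero.mp (Nat.le_zero.mp hcard)
    subst hemp
    refine ⟨∅, by simp, by simp, by simp, ?_⟩
    have h0 : ∀ t : M, phi μ vals owner (A t ∩ (∅ : Finset I)) = 0 := fun t => by
      rw [Finset.inter_empty]; exact phi_empty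
    rw [Finset.sum_eq_zero (fun t _ => h0 t)]
    simp [revenue]
  | succ n ih =>
    intro I' hcard hsub
    rcases Finset.eq_empty_or_nonempty I' with rfl | hne
    · exact ih ∅ (by simp) (by simp)
    obtain ⟨j, hjI, hmax⟩ := Finset.exists_max_image I' (hval μ vals) hne
    by_cases hB : ∃ i' : B, i' ≠ owner j
    · obtain ⟨i', hi'⟩ := hB
      obtain ⟨t₀, hjt₀⟩ : ∃ t₀, j ∈ Iset t₀ := by
        have hx := hsub hjI
        rw [Finset.mem_sup] at hx
        obtain ⟨t, _, ht⟩ := hx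
        exact ⟨t, ht⟩
      -- select the cover Sj
      have hsel : ∃ Sj : Finset I, Sj ⊆ I'.erase j ∧ IsCover Iset owner j Sj ∧
          ((hval μ vals j ≤ ∑ x ∈ Sj, hval μ vals x ∧
              ∑ x ∈ Sj, hval μ vals x ≤ 2 * hval μ vals j) ∨
            ((∑ x ∈ Sj, hval μ vals x) < hval μ vals j ∧
              ∀ S' ⊆ I'.erase j, IsCover Iset owner j S' →
                ∑ x ∈ S', hval μ vals x ≤ ∑ x ∈ Sj, hval μ vals x)) := by
        set covers := (I'.erase j).powerset.filter (fun S => IsCover Iset owner j S) with hcovers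
        have hemp : (∅ : Finset I) ∈ covers :=
          Finset.mem_filter.mpr ⟨Finset.empty_mem_powerset _, ⟨t₀, i', hjt₀, hi', by simp⟩⟩
        obtain ⟨Smax, hSmax, hmaxprop⟩ :=
          Finset.exists_max_image covers (fun S => ∑ x ∈ S, hval μ vals x) ⟨∅, hemp⟩
        by_cases hlt : ∑ x ∈ Smax, hval μ vals x < hval μ vals j
        · exact ⟨Smax, Finset.mem_powerset.mp (Finset.mem_filter.mp hSmax).1,
            (Finset.mem_filter.mp hSmax).2,
            Or.inr ⟨hlt, fun S' hS' hc =>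
              hmaxprop S' (Finset.mem_filter.mpr ⟨Finset.mem_powerset.mpr hS', hc⟩)⟩⟩
        · push_neg at hlt
          set F := covers.filter (fun S => hval μ vals j ≤ ∑ x ∈ S, hval μ vals x) with hF
          have hSmaxF : Smax ∈ F := Finset.mem_filter.mpr ⟨hSmax, hlt⟩
          obtain ⟨S1, hS1F, hminprop⟩ :=
            Finset.exists_min_image F (fun S => S.card) ⟨Smax, hSmaxF⟩
          have hS1covers : S1 ∈ covers := (Finset.mem_filter.mp hS1F).1
          have hS1sub : S1 ⊆ I'.erase j :=
            Finset.mem_powerset.mp (Finset.mem_filter.mp hS1covers).1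
          have hS1cov : IsCover Iset owner j S1 := (Finset.mem_filter.mp hS1covers).2
          have hS1ge : hval μ vals j ≤ ∑ x ∈ S1, hval μ vals x := (Finset.mem_filter.mp hS1F).2
          rcases Finset.eq_empty_or_nonempty S1 with rfl | hS1ne
          · have hj0 : hval μ vals j = 0 := le_antisymm (by simpa using hS1ge) (hval_nonneg j)
            exact ⟨∅, Finset.empty_subset _, ⟨t₀, i', hjt₀, hi', by simp⟩,
              Or.inl ⟨by simp [hj0], by simp [hj0]⟩⟩
          · obtain ⟨x, hx⟩ := hS1ne
            have hxek : S1.erase x ∈ covers := Finset.mem_filter.mpr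
              ⟨Finset.mem_powerset.mpr ((Finset.erase_subset _ _).trans hS1sub),
                cover_subset hS1cov (Finset.erase_subset _ _)⟩
            have hltx : ∑ y ∈ S1.erase x, hval μ vals y < hval μ vals j := by
              by_contra hge
              push_neg at hge
              have hmemF : S1.erase x ∈ F := Finset.mem_filter.mpr ⟨hxek, hge⟩
              have h1 := hminprop _ hmemF
              have hclt : (S1.erase x).card < S1.card := Finset.card_erase_lt_of_mem hx
              omega
            have hxle : hval μ vals x ≤ hval μ vals j :=
              hmax x ((Finset.erase_subset _ _) (hS1sub hx))
            have hsum : ∑ y ∈ S1.erase x, hval μ vals y + hval μ vals x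
                = ∑ y ∈ S1, hval μ vals y := Finset.sum_erase_add _ _ hx
            exact ⟨S1, hS1sub, hS1cov, Or.inl ⟨hS1ge, by linarith⟩⟩
      obtain ⟨Sj, hSjsub, hSjcov, hcase⟩ := hsel
      set T := insert j Sj with hTdef
      have hgain := stepA hμ hv howner hA hAdisj I' j Sj hjI hmax hSjsub hSjcov hcase
      have hTI : T ⊆ I' := Finset.insert_subset hjI (hSjsub.trans (Finset.erase_subset _ _))
      set I'' := I' \ T with hI''
      have hjT : j ∈ T := Finset.mem_insert_self _ _
      have hjI'' : j ∉ I'' := by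
        rw [hI'']
        simp [hjT]
      have hI''I : I'' ⊆ I' := by rw [hI'']; exact Finset.sdiff_subset
      have hcard'' : I''.card ≤ n := by
        have hss : I'' ⊂ I' := (Finset.ssubset_iff_of_subset hI''I).mpr ⟨j, hjI, hjI''⟩
        have := Finset.card_lt_card hss
        omega
      obtain ⟨P', hP'parts, hP'disj, hP'union, hP'rev⟩ := ih I'' hcard'' (hI''I.trans hsub)
      have hP'subI'' : ∀ S ∈ P', S ⊆ I'' := fun S hS x hx => by
        rw [← hP'union]
        exact Finset.mem_biUnion.mpr ⟨S, hS, hx⟩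
      have hTP' : T ∉ P' := fun hmem => hjI'' (hP'subI'' T hmem hjT)
      refine ⟨insert T P', ?_, ?_, ?_, ?_⟩
      · intro S hS
        rcases Finset.mem_insert.mp hS with rfl | hS'
        · refine ⟨⟨j, hjT⟩, ?_⟩
          obtain ⟨t₁, i₁, hjt₁, _, hmem⟩ := hSjcov
          exact ⟨t₁, Finset.insert_subset hjt₁ (fun x hx => (hmem x hx).1)⟩
        · exact hP'parts S hS'
      · intro S hS S' hS' hne
        have hdisjT : ∀ S'' ∈ P', Disjoint T S'' := fun S'' hS'' =>
          Finset.disjoint_left.mpr (fun x hxT hxS => by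
            have := hP'subI'' S'' hS'' hxS
            rw [hI''] at this
            exact (Finset.mem_sdiff.mp this).2 hxT)
        rcases Finset.mem_insert.mp hS with rfl | h1 <;>
          rcases Finset.mem_insert.mp hS' with rfl | h2
        · exact absurd rfl hne
        · exact hdisjT _ h2
        · exact (hdisjT _ h1).symm
        · exact hP'disj S h1 S' h2 hne
      · rw [Finset.biUnion_insert, hP'union, hI'', id]
        exact Finset.union_sdiff_of_subset hTI
      · have hrev : revenue μ vals (insert T P') = partVal μ vals T + revenue μ vals P' :=
          Finset.sum_insert hTP'
        rw [hrev]
        linarith [hgain, hP'rev]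
    · -- degenerate: every bidder equals owner j
      push_neg at hB
      refine ⟨I'.image (fun x => {x}), ?_, ?_, ?_, ?_⟩
      · intro S hS
        obtain ⟨x, hxI, rfl⟩ := Finset.mem_image.mp hS
        refine ⟨⟨x, Finset.mem_singleton_self x⟩, ?_⟩
        have hxU := hsub hxI
        rw [Finset.mem_sup] at hxU
        obtain ⟨t, _, ht⟩ := hxU
        exact ⟨t, Finset.singleton_subset_iff.mpr ht⟩
      · intro S hS S' hS' hne
        obtain ⟨x, _, rfl⟩ := Finset.mem_image.mp hS
        obtain ⟨y, _, rfl⟩ := Finset.mem_image.mp hS'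
        refine Finset.disjoint_left.mpr (fun a ha hb => ?_)
        rw [Finset.mem_singleton] at ha hb
        have hxy : x = y := by rw [← ha, hb]
        exact hne (by rw [hxy])
      · ext x; simp
      · have hphile : ∀ t : M, phi μ vals owner (A t ∩ I') ≤ 0 := by
          intro t
          rw [phi_eq]
          have hgeq : gfun μ vals owner (A t ∩ I') (owner j)
              = ∑ x ∈ A t ∩ I', hval μ vals x := by
            unfold gfun
            congr 1
            apply Finset.filter_true_of_mem
            intro x _
            exact hB (owner x)
          have h2 := gfun_le_mxf (μ := μ) (vals := vals) (owner := owner) (A t ∩ I') (owner j)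
          rw [hgeq] at h2
          linarith
        have hsums : ∑ t : M, phi μ vals owner (A t ∩ I') ≤ 0 :=
          Finset.sum_nonpos (fun t _ => hphile t)
        have hrev0 : 0 ≤ revenue μ vals (I'.image fun x => {x}) :=
          Finset.sum_nonneg (fun S _ => partVal_nonneg S)
        linarith

end PartB

/-- The greedy auxiliary algorithm for local experts: (a) no iteration decreases
`R(P) + (1/3) Σ_t φ(A_t ∩ I')` — adding the part `{j} ∪ S_j` (for `j` of maximal `h` in
the pool `I'` and `S_j` a cover chosen by the greedy rule) gains at least a third of the
loss in `Σ_t φ(A_t ∩ I')`; (b) consequently, there is a joint partition `P_A`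
implementable by the local experts with `R(P_A) ≥ (1/3) Σ_t φ(A_t)`. -/
theorem local_experts_greedy {I B M : Type*} [Fintype I] [DecidableEq I]
    [Fintype B] [DecidableEq B] [Fintype M]
    (μ : I → ℝ) (vals : B → I → ℝ)
    (hμ : ∀ j, 0 ≤ μ j) (hv : ∀ i j, 0 ≤ vals i j)
    (Iset : M → Finset I)
    (owner : I → B) (howner : ∀ (i : B) (j : I), vals i j ≤ vals (owner j) j)
    (A : M → Finset I) (hA : ∀ t, A t ⊆ Iset t)
    (hAdisj : ∀ t t', t ≠ t' → Disjoint (A t) (A t')) :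
    (∀ (I' : Finset I) (j : I) (Sj : Finset I),
      j ∈ I' → (∀ j' ∈ I', hval μ vals j' ≤ hval μ vals j) →
      Sj ⊆ I'.erase j → IsCover Iset owner j Sj →
      ((hval μ vals j ≤ ∑ x ∈ Sj, hval μ vals x ∧
          ∑ x ∈ Sj, hval μ vals x ≤ 2 * hval μ vals j) ∨
        ((∑ x ∈ Sj, hval μ vals x) < hval μ vals j ∧
          ∀ S' ⊆ I'.erase j, IsCover Iset owner j S' →
            ∑ x ∈ S', hval μ vals x ≤ ∑ x ∈ Sj, hval μ vals x)) →
      (1 / 3 : ℝ) * ∑ t : M, phi μ vals owner (A t ∩ I') ≤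
        partVal μ vals (insert j Sj) +
          (1 / 3 : ℝ) * ∑ t : M, phi μ vals owner (A t ∩ (I' \ insert j Sj))) ∧
    ∃ PA : Finset (Finset I), IsPartition PA ∧
      (∀ S ∈ PA, S = (Finset.univ.sup Iset)ᶜ ∨ ∃ t : M, S ⊆ Iset t) ∧
      (1 / 3 : ℝ) * (∑ t : M, phi μ vals owner (A t)) ≤ revenue μ vals PA := by
  classical
  constructor
  · exact fun I' j Sj h1 h2 h3 h4 h5 => stepA hμ hv howner hA hAdisj I' j Sj h1 h2 h3 h4 h5
  · set U := Finset.univ.sup Iset with hU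
    obtain ⟨P, hparts, hdisj, hunion, hrev⟩ :=
      greedy_partition hμ hv howner hA hAdisj U.card U le_rfl Finset.Subset.rfl
    have hAU : ∀ t, A t ∩ U = A t := fun t =>
      Finset.inter_eq_left.mpr ((hA t).trans (Finset.le_sup (Finset.mem_univ t)))
    have hsc : ∑ t : M, phi μ vals owner (A t ∩ U) = ∑ t : M, phi μ vals owner (A t) :=
      Finset.sum_congr rfl (fun t _ => by rw [hAU t])
    rw [hsc] at hrev
    have hPsubU : ∀ S ∈ P, S ⊆ U := fun S hS x hx => by
      rw [← hunion]
      exact Finset.mem_biUnion.mpr ⟨S, hS, hx⟩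
    by_cases hc : (Uᶜ : Finset I) = ∅
    · refine ⟨P, ⟨?_, hdisj, ?_⟩, ?_, hrev⟩
      · intro x
        have hxU : x ∈ U := by
          have hUuniv := (Finset.compl_eq_empty_iff U).mp hc
          rw [hUuniv]
          exact Finset.mem_univ x
        rw [← hunion] at hxU
        exact Finset.mem_biUnion.mp hxU
      · intro h0
        exact absurd rfl (hparts ∅ h0).1.ne_empty
      · intro S hS
        exact Or.inr (hparts S hS).2
    · have hUc : (Uᶜ : Finset I).Nonempty := Finset.nonempty_iff_ne_empty.mpr hc
      have hUcP : Uᶜ ∉ P := by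
        intro hmem
        obtain ⟨x, hx⟩ := hUc
        exact (Finset.mem_compl.mp hx) (hPsubU _ hmem hx)
      refine ⟨insert Uᶜ P, ⟨?_, ?_, ?_⟩, ?_, ?_⟩
      · intro x
        by_cases hxU : x ∈ U
        · rw [← hunion] at hxU
          obtain ⟨S, hS, hxS⟩ := Finset.mem_biUnion.mp hxU
          exact ⟨S, Finset.mem_insert_of_mem hS, hxS⟩
        · exact ⟨Uᶜ, Finset.mem_insert_self _ _, Finset.mem_compl.mpr hxU⟩
      · intro S hS S' hS' hne
        have hdc : ∀ S'' ∈ P, Disjoint (Uᶜ) S'' := fun S'' h'' =>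
          Finset.disjoint_left.mpr (fun x hxc hxS => (Finset.mem_compl.mp hxc) (hPsubU _ h'' hxS))
        rcases Finset.mem_insert.mp hS with rfl | h1 <;>
          rcases Finset.mem_insert.mp hS' with rfl | h2
        · exact absurd rfl hne
        · exact hdc _ h2
        · exact (hdc _ h1).symm
        · exact hdisj S h1 S' h2 hne
      · intro hmem
        rcases Finset.mem_insert.mp hmem with heq | h1
        · exact hc heq.symm
        · exact absurd rfl (hparts ∅ h1).1.ne_empty
      · intro S hS
        rcases Finset.mem_insert.mp hS with rfl | h1
        · exact Or.inl rfl
        · exact Or.inr (hparts S h1).2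
      · have hins : revenue μ vals (insert Uᶜ P) = partVal μ vals Uᶜ + revenue μ vals P :=
          Finset.sum_insert hUcP
        rw [hins]
        have hnn := partVal_nonneg (μ := μ) (vals := vals) (Uᶜ : Finset I)
        linarith
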